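/- For an orientable statistical manifold (M, g, ∇) with dual connection ∇*, the Ricci tensors satisfy (1/2)Ric(Y,Z) − (1/2)Ric*(Y,Z) = (div^∇̂ K)(Y,Z) − (∇̂_Y τ_g)(Z), where div^∇̂ K is the divergence of K with respect to the Levi-Civita connection and τ_g(X) = tr K_X. -/

import Mathlib

open scoped BigOperators

namespace StatMfd

/-- Vector fields on an "abstract manifold": derivations of the algebra `A`
of smooth functions. -/
abbrev VF (A : Type*) [CommRing A] [Algebra ℝ A] := Derivation ℝ A A

variable {A : Type*} [CommRing A] [Algebra ℝ A]

/-- An affine connection on vector fields. -/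
structure Conn (A : Type*) [CommRing A] [Algebra ℝ A] where
  D : VF A → VF A → VF A
  add_left : ∀ X Y Z, D (X + Y) Z = D X Z + D Y Z
  smul_left : ∀ (f : A) (X Y), D (f • X) Y = f • D X Y
  add_right : ∀ X Y Z, D X (Y + Z) = D X Y + D X Z
  leibniz : ∀ (f : A) (X Y), D X (f • Y) = f • D X Y + (X f) • Y

/-- A pseudo-Riemannian metric: a symmetric nondegenerate `A`-bilinear form. -/
structure Metric (A : Type*) [CommRing A] [Algebra ℝ A] where
  g : VF A → VF A → A
  add_left : ∀ X Y Z, g (X + Y) Z = g X Z + g Y Z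
  smul_left : ∀ (f : A) (X Y), g (f • X) Y = f * g X Y
  symm : ∀ X Y, g X Y = g Y X
  nondeg : ∀ X, (∀ Y, g X Y = 0) → X = 0

/-- The connection `∇` is torsion free. -/
def TorsionFree (C : Conn A) : Prop := ∀ X Y, C.D X Y - C.D Y X = ⁅X, Y⁆

/-- The cubic form `C(X,Y,Z) = (∇_X g)(Y,Z)`. -/
def cubic (gm : Metric A) (C : Conn A) (X Y Z : VF A) : A :=
  X (gm.g Y Z) - gm.g (C.D X Y) Z - gm.g Y (C.D X Z)

/-- Total symmetry of a `(0,3)`-tensor (valued in `A` or in vector fields). -/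
def TotSym3 {B : Type*} (T : VF A → VF A → VF A → B) : Prop :=
  (∀ X Y Z, T X Y Z = T Y X Z) ∧ (∀ X Y Z, T X Y Z = T X Z Y)

/-- Total symmetry of a `(0,4)`-tensor. -/
def TotSym4 (T : VF A → VF A → VF A → VF A → A) : Prop :=
  (∀ X Y Z W, T X Y Z W = T Y X Z W) ∧ (∀ X Y Z W, T X Y Z W = T X Z Y W) ∧
    (∀ X Y Z W, T X Y Z W = T X Y W Z)

/-- `(g, ∇)` is a statistical structure. -/
def IsStatistical (gm : Metric A) (C : Conn A) : Prop :=
  TorsionFree C ∧ TotSym3 (cubic gm C)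

/-- `∇*` is the dual connection of `∇` with respect to `g`. -/
def IsDual (gm : Metric A) (C Cs : Conn A) : Prop :=
  ∀ X Y Z, X (gm.g Y Z) = gm.g (C.D X Y) Z + gm.g Y (Cs.D X Z)

/-- `h` is the Levi-Civita connection of `g`. -/
def IsLeviCivita (gm : Metric A) (h : Conn A) : Prop :=
  TorsionFree h ∧ ∀ X Y Z, X (gm.g Y Z) = gm.g (h.D X Y) Z + gm.g Y (h.D X Z)

/-- The difference tensor `K(X,Y) = ∇_X Y − ∇̂_X Y`. -/
def Kdiff (C h : Conn A) (X Y : VF A) : VF A := C.D X Y - h.D X Y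

/-- The curvature tensor of a connection. -/
def curv (C : Conn A) (X Y Z : VF A) : VF A :=
  C.D X (C.D Y Z) - C.D Y (C.D X Z) - C.D ⁅X, Y⁆ Z

/-- `(∇_X K)(Y,Z)` for a `(1,2)`-tensor `K`. -/
def covK (C : Conn A) (K : VF A → VF A → VF A) (X Y Z : VF A) : VF A :=
  C.D X (K Y Z) - K (C.D X Y) Z - K Y (C.D X Z)

/-- `(∇_X T)(Y,Z,W)` for a `(0,3)`-tensor `T`. -/
def covC (C : Conn A) (T : VF A → VF A → VF A → A) (X Y Z W : VF A) : A :=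
  X (T Y Z W) - T (C.D X Y) Z W - T Y (C.D X Z) W - T Y Z (C.D X W)

/-- `(∇_X T)(Y,Z)` for a `(0,2)`-tensor `T`. -/
def cov2 (C : Conn A) (T : VF A → VF A → A) (X Y Z : VF A) : A :=
  X (T Y Z) - T (C.D X Y) Z - T Y (C.D X Z)

/-- `(∇_X R)(Y,Z)W` for the curvature tensor of a connection. -/
def covR (C : Conn A) (X Y Z W : VF A) : VF A :=
  C.D X (curv C Y Z W) - curv C (C.D X Y) Z W - curv C Y (C.D X Z) W
    - curv C Y Z (C.D X W)

/-- A global frame of vector fields together with its dual coframe. -/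
structure Frame (A : Type*) [CommRing A] [Algebra ℝ A] (n : ℕ) where
  e : Fin n → VF A
  ε : Fin n → VF A → A
  ε_add : ∀ i X Y, ε i (X + Y) = ε i X + ε i Y
  ε_smul : ∀ i (f : A) X, ε i (f • X) = f * ε i X
  expand : ∀ X, X = ∑ i, ε i X • e i

/-- The Ricci curvature `Ric(Y,Z) = tr{X ↦ R(X,Y)Z}` computed in a frame. -/
def ricci {n : ℕ} (F : Frame A n) (C : Conn A) (Y Z : VF A) : A :=
  ∑ i, F.ε i (curv C (F.e i) Y Z)

/-- `τ_g(X) = tr K_X` computed in a frame. -/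
def tau {n : ℕ} (F : Frame A n) (K : VF A → VF A → VF A) (X : VF A) : A :=
  ∑ i, F.ε i (K X (F.e i))

/-- `(div^∇̂ K)(Y,Z)`, the trace of `V ↦ (∇̂_V K)(Y,Z)`, computed in a frame. -/
def divK {n : ℕ} (F : Frame A n) (h : Conn A) (K : VF A → VF A → VF A)
    (Y Z : VF A) : A :=
  ∑ i, F.ε i (covK h K (F.e i) Y Z)

/-- `(M,g,∇)` has constant curvature `k`. -/
def ConstCurv (gm : Metric A) (C : Conn A) (k : ℝ) : Prop :=
  ∀ X Y Z, curv C X Y Z = k • (gm.g Y Z • X - gm.g X Z • Y)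

/-- Projective flatness of a connection, via Eisenhart's characterization:
for `n = 2` total symmetry of `∇ Ric`, for `n ≥ 3` vanishing of the
projective curvature tensor. -/
def ProjFlat {n : ℕ} (F : Frame A n) (C : Conn A) : Prop :=
  (n = 2 ∧ TotSym3 (cov2 C (ricci F C))) ∨
    (3 ≤ n ∧ ∀ X Y Z, curv C X Y Z =
      ((n : ℝ) - 1)⁻¹ • (ricci F C Y Z • X - ricci F C X Z • Y))


-- AUX LEMMAS (to be inserted before stmt13)
section Aux

variable {A : Type*} [CommRing A] [Algebra ℝ A]

private def Conn.rightHom (C : Conn A) (X : VF A) : VF A →+ VF A :=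
  AddMonoidHom.mk' (C.D X) (C.add_right X)

private lemma Conn.D_sub_right (C : Conn A) (X Y Z : VF A) :
    C.D X (Y - Z) = C.D X Y - C.D X Z :=
  map_sub (C.rightHom X) Y Z

private lemma Conn.D_sum_right (C : Conn A) (X : VF A) {ι : Type*} (s : Finset ι)
    (f : ι → VF A) : C.D X (∑ i ∈ s, f i) = ∑ i ∈ s, C.D X (f i) :=
  map_sum (C.rightHom X) f s

private def Conn.leftHom (C : Conn A) (Z : VF A) : VF A →+ VF A :=
  AddMonoidHom.mk' (fun X => C.D X Z) (fun X Y => C.add_left X Y Z)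

private lemma Conn.D_sub_left (C : Conn A) (X Y Z : VF A) :
    C.D (X - Y) Z = C.D X Z - C.D Y Z :=
  map_sub (C.leftHom Z) X Y

private def Frame.epsHom {n : ℕ} (F : Frame A n) (i : Fin n) : VF A →+ A :=
  AddMonoidHom.mk' (F.ε i) (F.ε_add i)

private lemma Frame.eps_sub {n : ℕ} (F : Frame A n) (i : Fin n) (X Y : VF A) :
    F.ε i (X - Y) = F.ε i X - F.ε i Y :=
  map_sub (F.epsHom i) X Y

private lemma Frame.eps_sum {n : ℕ} (F : Frame A n) (i : Fin n) {ι : Type*}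
    (s : Finset ι) (f : ι → VF A) :
    F.ε i (∑ j ∈ s, f j) = ∑ j ∈ s, F.ε i (f j) :=
  map_sum (F.epsHom i) f s

private def Metric.leftHom (gm : Metric A) (Z : VF A) : VF A →+ A :=
  AddMonoidHom.mk' (fun X => gm.g X Z) (fun X Y => gm.add_left X Y Z)

private lemma Metric.sub_left (gm : Metric A) (X Y Z : VF A) :
    gm.g (X - Y) Z = gm.g X Z - gm.g Y Z :=
  map_sub (gm.leftHom Z) X Y

private lemma Metric.sub_right (gm : Metric A) (X Y Z : VF A) :
    gm.g X (Y - Z) = gm.g X Y - gm.g X Z := by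
  rw [gm.symm, gm.sub_left, gm.symm Y X, gm.symm Z X]

-- Kdiff bilinearity
private lemma Kdiff_add_left (C h : Conn A) (X Y Z : VF A) :
    Kdiff C h (X + Y) Z = Kdiff C h X Z + Kdiff C h Y Z := by
  simp only [Kdiff, C.add_left, h.add_left]; abel

private lemma Kdiff_sub_left (C h : Conn A) (X Y Z : VF A) :
    Kdiff C h (X - Y) Z = Kdiff C h X Z - Kdiff C h Y Z := by
  simp only [Kdiff, C.D_sub_left, h.D_sub_left]; abel

private lemma Kdiff_smul_left (C h : Conn A) (f : A) (X Z : VF A) :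
    Kdiff C h (f • X) Z = f • Kdiff C h X Z := by
  simp only [Kdiff, C.smul_left, h.smul_left, smul_sub]

private lemma Kdiff_add_right (C h : Conn A) (X Y Z : VF A) :
    Kdiff C h X (Y + Z) = Kdiff C h X Y + Kdiff C h X Z := by
  simp only [Kdiff, C.add_right, h.add_right]; abel

private lemma Kdiff_sub_right (C h : Conn A) (X Y Z : VF A) :
    Kdiff C h X (Y - Z) = Kdiff C h X Y - Kdiff C h X Z := by
  simp only [Kdiff, C.D_sub_right, h.D_sub_right]; abel

private lemma Kdiff_smul_right (C h : Conn A) (f : A) (X Y : VF A) :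
    Kdiff C h X (f • Y) = f • Kdiff C h X Y := by
  simp only [Kdiff, C.leibniz, h.leibniz, smul_sub]; abel

private lemma Kdiff_symm (C h : Conn A) (hC : TorsionFree C) (hh : TorsionFree h)
    (X Y : VF A) : Kdiff C h X Y = Kdiff C h Y X := by
  have h1 := hC X Y
  have h2 := hh X Y
  simp only [Kdiff]
  have : C.D X Y - C.D Y X = h.D X Y - h.D Y X := by rw [h1, h2]
  have := sub_eq_sub_iff_sub_eq_sub.mp this
  exact this

end Aux

section Aux2

variable {A : Type*} [CommRing A] [Algebra ℝ A]

/-- `g(Y, K(X,Z)) = g(X, K(Y,Z))` from total symmetry of the cubic form. -/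
private lemma gK_symm (gm : Metric A) (C h : Conn A)
    (hstat : IsStatistical gm C) (hLC : IsLeviCivita gm h)
    (X Y Z : VF A) : gm.g Y (Kdiff C h X Z) = gm.g X (Kdiff C h Y Z) := by
  have hcub : ∀ X Y Z : VF A, cubic gm C X Y Z
      = - gm.g (Kdiff C h X Y) Z - gm.g Y (Kdiff C h X Z) := by
    intro X Y Z
    simp only [cubic, Kdiff, gm.sub_left, gm.sub_right, hLC.2 X Y Z]
    ring
  have hsym := hstat.2.1 X Y Z
  rw [hcub X Y Z, hcub Y X Z, Kdiff_symm C h hstat.1 hLC.1 Y X] at hsym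
  linear_combination -hsym

/-- swap `K` across the metric: `g(K(X,Y), Z) = g(Y, K(X,Z))`. -/
private lemma gK_move (gm : Metric A) (C h : Conn A)
    (hstat : IsStatistical gm C) (hLC : IsLeviCivita gm h)
    (X Y Z : VF A) : gm.g (Kdiff C h X Y) Z = gm.g Y (Kdiff C h X Z) := by
  rw [gm.symm]
  rw [gK_symm gm C h hstat hLC X Z Y, gK_symm gm C h hstat hLC X Y Z]
  rw [Kdiff_symm C h hstat.1 hLC.1 Z Y]

/-- The dual connection is `∇* = ∇̂ − K`. -/
private lemma dual_eq (gm : Metric A) (C Cs h : Conn A)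
    (hstat : IsStatistical gm C) (hLC : IsLeviCivita gm h)
    (hdual : IsDual gm C Cs) (X Z : VF A) :
    Cs.D X Z = h.D X Z - Kdiff C h X Z := by
  have key : ∀ Y, gm.g (Cs.D X Z - (h.D X Z - Kdiff C h X Z)) Y = 0 := by
    intro Y
    rw [gm.sub_left, gm.sub_left]
    have h1 := hdual X Y Z
    have h2 := hLC.2 X Y Z
    have h3 : gm.g (Kdiff C h X Z) Y = gm.g Y (Kdiff C h X Z) := gm.symm _ _
    have h4 := gK_move gm C h hstat hLC X Y Z
    have h5 : gm.g (Kdiff C h X Y) Z = gm.g (C.D X Y) Z - gm.g (h.D X Y) Z := by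
      simp only [Kdiff, gm.sub_left]
    have hCs : gm.g (Cs.D X Z) Y = gm.g Y (Cs.D X Z) := gm.symm _ _
    have hh : gm.g (h.D X Z) Y = gm.g Y (h.D X Z) := gm.symm _ _
    linear_combination hCs - hh + h3 - h1 + h2 - h4 + h5
  have := gm.nondeg _ key
  exact sub_eq_zero.mp this

/-- Curvature difference formula. -/
private lemma curv_diff (gm : Metric A) (C Cs h : Conn A)
    (hstat : IsStatistical gm C) (hLC : IsLeviCivita gm h)
    (hdual : IsDual gm C Cs) (X Y Z : VF A) :
    curv C X Y Z - curv Cs X Y Z =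
      (covK h (Kdiff C h) X Y Z - covK h (Kdiff C h) Y X Z) +
      (covK h (Kdiff C h) X Y Z - covK h (Kdiff C h) Y X Z) := by
  have hC : ∀ X Y : VF A, C.D X Y = h.D X Y + Kdiff C h X Y := by
    intro X Y; simp [Kdiff]
  have hCs : ∀ X Y : VF A, Cs.D X Y = h.D X Y - Kdiff C h X Y :=
    dual_eq gm C Cs h hstat hLC hdual
  have hbr : Kdiff C h ⁅X, Y⁆ Z =
      Kdiff C h (h.D X Y) Z - Kdiff C h (h.D Y X) Z := by
    rw [← Kdiff_sub_left, hLC.1 X Y]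
  simp only [curv, covK, hC, hCs, h.add_right, h.D_sub_right,
    Kdiff_add_right, Kdiff_sub_right, hbr]
  abel

end Aux2

section Aux3

variable {A : Type*} [CommRing A] [Algebra ℝ A]

private lemma deriv_mul (Y : VF A) (a b : A) : Y (a * b) = a * Y b + b * Y a := by
  have := Y.leibniz a b; simp only [smul_eq_mul] at this; exact this

/-- Key algebraic identity: the "derivative of the projection" term vanishes. -/
private lemma key_zero {n : ℕ} (Y : VF A) (M a : Fin n → Fin n → A)
    (R1 : ∀ i k, a i k = ∑ j, a i j * M k j)
    (R2 : ∀ i j, a i j = ∑ k, M k i * a k j)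
    (R3 : ∀ k i, M k i = ∑ j, M j i * M k j) :
    ∑ i, ∑ j, a i j * Y (M i j) = 0 := by
  have e1 : ∀ k j, ∑ i, M k i * Y (M i j) = Y (M k j) - ∑ i, M i j * Y (M k i) := by
    intro k j
    have h3 : Y (M k j) = ∑ i, (M i j * Y (M k i) + M k i * Y (M i j)) := by
      conv_lhs => rw [R3 k j]
      rw [map_sum]
      exact Finset.sum_congr rfl fun i _ => deriv_mul Y _ _
    rw [Finset.sum_add_distrib] at h3
    linear_combination -h3
  have inner : ∀ k, ∑ j, a k j * (∑ i, M k i * Y (M i j))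
      = ∑ j, a k j * Y (M k j) - ∑ i, a k i * Y (M k i) := by
    intro k
    calc ∑ j, a k j * (∑ i, M k i * Y (M i j))
        = ∑ j, (a k j * Y (M k j) - ∑ i, a k j * M i j * Y (M k i)) := by
          refine Finset.sum_congr rfl fun j _ => ?_
          rw [e1 k j, mul_sub, Finset.mul_sum]
          congr 1
          exact Finset.sum_congr rfl fun i _ => by ring
      _ = ∑ j, a k j * Y (M k j) - ∑ j, ∑ i, a k j * M i j * Y (M k i) :=
          Finset.sum_sub_distrib _ _
      _ = ∑ j, a k j * Y (M k j) - ∑ i, (∑ j, a k j * M i j) * Y (M k i) := by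
          congr 1
          rw [Finset.sum_comm]
          exact Finset.sum_congr rfl fun i _ => by rw [Finset.sum_mul]
      _ = ∑ j, a k j * Y (M k j) - ∑ i, a k i * Y (M k i) := by
          congr 1
          exact Finset.sum_congr rfl fun i _ => by rw [← R1 k i]
  have main : ∑ i, ∑ j, a i j * Y (M i j)
      = ∑ k, (∑ j, a k j * Y (M k j) - ∑ i, a k i * Y (M k i)) := by
    calc ∑ i, ∑ j, a i j * Y (M i j)
        = ∑ i, ∑ j, ∑ k, M k i * a k j * Y (M i j) := by
          refine Finset.sum_congr rfl fun i _ => Finset.sum_congr rfl fun j _ => ?_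
          rw [← Finset.sum_mul, ← R2 i j]
      _ = ∑ j, ∑ i, ∑ k, M k i * a k j * Y (M i j) := Finset.sum_comm
      _ = ∑ j, ∑ k, ∑ i, M k i * a k j * Y (M i j) :=
          Finset.sum_congr rfl fun j _ => Finset.sum_comm
      _ = ∑ k, ∑ j, ∑ i, M k i * a k j * Y (M i j) := Finset.sum_comm
      _ = ∑ k, ∑ j, a k j * (∑ i, M k i * Y (M i j)) := by
          refine Finset.sum_congr rfl fun k _ => Finset.sum_congr rfl fun j _ => ?_
          rw [Finset.mul_sum]
          exact Finset.sum_congr rfl fun i _ => by ring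
      _ = ∑ k, (∑ j, a k j * Y (M k j) - ∑ i, a k i * Y (M k i)) :=
          Finset.sum_congr rfl fun k _ => inner k
  rw [Finset.sum_sub_distrib] at main
  linear_combination main

/-- Trace commutes with covariant differentiation, for an `A`-linear `T`. -/
private lemma trace_deriv {n : ℕ} (F : Frame A n) (h : Conn A) (Y : VF A)
    (T : VF A → VF A) (Tadd : ∀ X₁ X₂, T (X₁ + X₂) = T X₁ + T X₂)
    (Tsmul : ∀ (f : A) (X : VF A), T (f • X) = f • T X) :
    ∑ i, F.ε i (h.D Y (T (F.e i))) - ∑ i, F.ε i (T (h.D Y (F.e i)))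
      = Y (∑ i, F.ε i (T (F.e i))) := by
  classical
  have Thom : ∀ (s : Finset (Fin n)) (f : Fin n → VF A),
      T (∑ j ∈ s, f j) = ∑ j ∈ s, T (f j) := fun s f =>
    map_sum (AddMonoidHom.mk' T Tadd) f s
  have R1 : ∀ i k : Fin n, F.ε k (T (F.e i))
      = ∑ j, F.ε j (T (F.e i)) * F.ε k (F.e j) := by
    intro i k
    conv_lhs => rw [F.expand (T (F.e i))]
    simp only [Frame.eps_sum, F.ε_smul]
  have R2 : ∀ i j : Fin n, F.ε j (T (F.e i))
      = ∑ k, F.ε k (F.e i) * F.ε j (T (F.e k)) := by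
    intro i j
    conv_lhs => rw [F.expand (F.e i)]
    rw [Thom]
    simp only [Tsmul, Frame.eps_sum, F.ε_smul]
  have R3 : ∀ k i : Fin n, F.ε k (F.e i)
      = ∑ j, F.ε j (F.e i) * F.ε k (F.e j) := by
    intro k i
    conv_lhs => rw [F.expand (F.e i)]
    simp only [Frame.eps_sum, F.ε_smul]
  have S1 : ∀ i, F.ε i (h.D Y (T (F.e i)))
      = ∑ j, (F.ε j (T (F.e i)) * F.ε i (h.D Y (F.e j))
          + Y (F.ε j (T (F.e i))) * F.ε i (F.e j)) := by
    intro i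
    conv_lhs => rw [F.expand (T (F.e i))]
    rw [h.D_sum_right, Frame.eps_sum]
    refine Finset.sum_congr rfl fun j _ => ?_
    rw [h.leibniz, F.ε_add, F.ε_smul, F.ε_smul]
  have S2 : ∀ i, F.ε i (T (h.D Y (F.e i)))
      = ∑ j, F.ε j (h.D Y (F.e i)) * F.ε i (T (F.e j)) := by
    intro i
    conv_lhs => rw [F.expand (h.D Y (F.e i))]
    rw [Thom]
    simp only [Tsmul, Frame.eps_sum, F.ε_smul]
  have RHS : Y (∑ i, F.ε i (T (F.e i))) = ∑ i, Y (F.ε i (T (F.e i))) :=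
    map_sum Y _ _
  simp only [S1, S2, RHS, Finset.sum_add_distrib]
  have swap : ∑ i, ∑ j, F.ε j (T (F.e i)) * F.ε i (h.D Y (F.e j))
      = ∑ i, ∑ j, F.ε j (h.D Y (F.e i)) * F.ε i (T (F.e j)) := by
    rw [Finset.sum_comm]
    exact Finset.sum_congr rfl fun i _ => Finset.sum_congr rfl fun j _ => by ring
  have diag : ∀ i, Y (F.ε i (T (F.e i)))
      = ∑ j, (F.ε j (T (F.e i)) * Y (F.ε i (F.e j))
          + F.ε i (F.e j) * Y (F.ε j (T (F.e i)))) := by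
    intro i
    conv_lhs => rw [R1 i i]
    rw [map_sum]
    exact Finset.sum_congr rfl fun j _ => deriv_mul Y _ _
  have expand_diag : ∑ i, Y (F.ε i (T (F.e i)))
      = ∑ i, ∑ j, F.ε j (T (F.e i)) * Y (F.ε i (F.e j))
        + ∑ i, ∑ j, F.ε i (F.e j) * Y (F.ε j (T (F.e i))) := by
    rw [← Finset.sum_add_distrib]
    exact Finset.sum_congr rfl fun i _ => by rw [diag i, Finset.sum_add_distrib]
  have hzero : ∑ i, ∑ j, (fun i j => F.ε j (T (F.e i))) i j
      * Y ((fun i j => F.ε i (F.e j)) i j) = 0 :=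
    key_zero Y (fun i j => F.ε i (F.e j)) (fun i j => F.ε j (T (F.e i))) R1 R2 R3
  simp only at hzero
  have comm2 : ∑ i, ∑ j, Y (F.ε j (T (F.e i))) * F.ε i (F.e j)
      = ∑ i, ∑ j, F.ε i (F.e j) * Y (F.ε j (T (F.e i))) :=
    Finset.sum_congr rfl fun i _ => Finset.sum_congr rfl fun j _ => mul_comm _ _
  linear_combination swap - expand_diag - hzero + comm2

end Aux3

/-- `(1/2)Ric(Y,Z) − (1/2)Ric*(Y,Z) = (div^∇̂ K)(Y,Z) − (∇̂_Y τ_g)(Z)`. -/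
theorem stmt13 {n : ℕ} (gm : Metric A) (C Cs h : Conn A) (F : Frame A n)
    (hstat : IsStatistical gm C) (hLC : IsLeviCivita gm h)
    (hTs : TorsionFree Cs) (hdual : IsDual gm C Cs) :
    ∀ Y Z, ((1 : ℝ)/2) • ricci F C Y Z - ((1 : ℝ)/2) • ricci F Cs Y Z =
      divK F h (Kdiff C h) Y Z -
        (Y (tau F (Kdiff C h) Z) - tau F (Kdiff C h) (h.D Y Z)) := by
  intro Y Z
  have hKsymm : ∀ X W : VF A, Kdiff C h X W = Kdiff C h W X :=
    Kdiff_symm C h hstat.1 hLC.1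
  have hcurv : ∀ i, F.ε i (curv C (F.e i) Y Z) - F.ε i (curv Cs (F.e i) Y Z)
      = (F.ε i (covK h (Kdiff C h) (F.e i) Y Z)
          - F.ε i (covK h (Kdiff C h) Y (F.e i) Z))
        + (F.ε i (covK h (Kdiff C h) (F.e i) Y Z)
          - F.ε i (covK h (Kdiff C h) Y (F.e i) Z)) := by
    intro i
    rw [← Frame.eps_sub, curv_diff gm C Cs h hstat hLC hdual, F.ε_add,
      Frame.eps_sub]
  have hric : ricci F C Y Z - ricci F Cs Y Z
      = (divK F h (Kdiff C h) Y Z - ∑ i, F.ε i (covK h (Kdiff C h) Y (F.e i) Z))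
        + (divK F h (Kdiff C h) Y Z
          - ∑ i, F.ε i (covK h (Kdiff C h) Y (F.e i) Z)) := by
    rw [ricci, ricci, ← Finset.sum_sub_distrib]
    rw [Finset.sum_congr rfl (fun i _ => hcurv i)]
    rw [Finset.sum_add_distrib, Finset.sum_sub_distrib]
    rfl
  have htr : ∑ i, F.ε i (covK h (Kdiff C h) Y (F.e i) Z)
      = Y (tau F (Kdiff C h) Z) - tau F (Kdiff C h) (h.D Y Z) := by
    have split : ∀ i, F.ε i (covK h (Kdiff C h) Y (F.e i) Z)
        = F.ε i (h.D Y (Kdiff C h (F.e i) Z))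
          - F.ε i (Kdiff C h (h.D Y (F.e i)) Z)
          - F.ε i (Kdiff C h (F.e i) (h.D Y Z)) := by
      intro i
      rw [covK, Frame.eps_sub, Frame.eps_sub]
    rw [Finset.sum_congr rfl (fun i _ => split i)]
    rw [Finset.sum_sub_distrib, Finset.sum_sub_distrib]
    have Tdef : ∑ i, F.ε i (h.D Y (Kdiff C h (F.e i) Z))
        - ∑ i, F.ε i (Kdiff C h (h.D Y (F.e i)) Z)
        = Y (∑ i, F.ε i (Kdiff C h (F.e i) Z)) :=
      trace_deriv F h Y (fun X => Kdiff C h X Z)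
        (fun X₁ X₂ => Kdiff_add_left C h X₁ X₂ Z)
        (fun f X => Kdiff_smul_left C h f X Z)
    have ht1 : ∑ i, F.ε i (Kdiff C h (F.e i) Z) = tau F (Kdiff C h) Z := by
      rw [tau]; exact Finset.sum_congr rfl fun i _ => by rw [hKsymm]
    have ht2 : ∑ i, F.ε i (Kdiff C h (F.e i) (h.D Y Z))
        = tau F (Kdiff C h) (h.D Y Z) := by
      rw [tau]; exact Finset.sum_congr rfl fun i _ => by rw [hKsymm]
    rw [Tdef, ht1, ht2]
  rw [← smul_sub, hric, htr]
  rw [← two_smul ℝ (divK F h (Kdiff C h) Y Z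
    - (Y (tau F (Kdiff C h) Z) - tau F (Kdiff C h) (h.D Y Z))), smul_smul]
  norm_num


end StatMfd
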